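/- Let K1, K2, K3 be positive real numbers and let {ξ_n}_{n≥0} be a real-valued process adapted to a filtration {𝓕_n}_{n≥0} on a probability space, with ξ_0 a deterministic real constant and |ξ_{n+1} − ξ_n| ≤ K3 almost surely for all n. Let T0 ∈ ℝ and define the stopping time τ0 = inf{n ∈ ℕ : ξ_n ≥ T0}. Assume that almost surely, for every n: E(ξ_{n+1} | 𝓕_n) ≥ ξ_n + K1 on the event {n < τ0}, and E(ξ_{n+1} | 𝓕_n) ≥ ξ_n + K2 on the event {n ≥ τ0}. Let T ∈ ℝ with T ≥ T0 and define τ = inf{n ∈ ℕ : ξ_n ≥ T}. Then E(τ − τ0) ≤ (|T0 − T| + 3·K3)/K2. -/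

import Mathlib

open MeasureTheory Filter
open scoped ENNReal


lemma aux_tel (f : ℕ → ℝ) (a c : ℕ) (hac : a ≤ c) :
    ∑ n ∈ Finset.Ico a c, (f (n + 1) - f n) = f c - f a := by
  rw [Finset.sum_Ico_eq_sum_range]
  have h := Finset.sum_range_sub (fun j => f (a + j)) (c - a)
  simp only [Nat.add_sub_cancel' hac, add_zero] at h
  rw [← h]
  apply Finset.sum_congr rfl
  intro j _
  rfl

lemma aux_sum (f : ℕ → ℝ) (T0 T K3 : ℝ) (hT : T0 ≤ T) (hK3 : 0 < K3)
    (h0 : f 0 < T) (hinc : ∀ n, |f (n + 1) - f n| ≤ K3) (N : ℕ) :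
    ∑ n ∈ Finset.range N,
      (if (∃ k ≤ n, T0 ≤ f k) ∧ ¬∃ k ≤ n, T ≤ f k then f (n + 1) - f n else 0)
      ≤ (T - T0) + K3 := by
  by_cases hP : ∃ k, T0 ≤ f k
  · set a := Nat.find hP with ha
    have hfa : T0 ≤ f a := Nat.find_spec hP
    by_cases hQ : ∃ k, T ≤ f k
    · set b := Nat.find hQ with hb
      have hfb : T ≤ f b := Nat.find_spec hQ
      have hb0 : 0 < b := Nat.pos_of_ne_zero (by
        intro h; rw [h] at hfb; linarith)
      have hcond : ∀ n, ((∃ k ≤ n, T0 ≤ f k) ∧ ¬∃ k ≤ n, T ≤ f k) ↔ (a ≤ n ∧ n < b) := by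
        intro n
        rw [← Nat.find_le_iff hP, ← Nat.find_le_iff hQ, not_le, ← ha, ← hb]
      simp only [hcond]
      rw [← Finset.sum_filter]
      have hset : (Finset.range N).filter (fun n => a ≤ n ∧ n < b) = Finset.Ico a (min b N) := by
        ext n; simp [Finset.mem_filter, Finset.mem_Ico]; omega
      rw [hset]
      rcases le_or_gt (min b N) a with h | h
      · rw [Finset.Ico_eq_empty (by omega)]
        simp; linarith
      · rw [aux_tel f a (min b N) h.le]
        have hfc : f (min b N) ≤ T + K3 := by
          rcases lt_or_ge (min b N) b with hcb | hcb
          · have := Nat.find_min hQ hcb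
            push_neg at this; linarith
          · have hcbe : min b N = b := by omega
            have h1 : f (b - 1) < T := by
              have := Nat.find_min hQ (show b - 1 < b by omega)
              push_neg at this; exact this
            have h2 := hinc (b - 1)
            rw [Nat.sub_add_cancel hb0] at h2
            rw [hcbe]
            have := abs_le.mp h2
            linarith [this.1]
        linarith
    · push_neg at hQ
      have hcond : ∀ n, ((∃ k ≤ n, T0 ≤ f k) ∧ ¬∃ k ≤ n, T ≤ f k) ↔ (a ≤ n) := by
        intro n
        rw [← Nat.find_le_iff hP, ← ha]
        simp only [and_iff_left_iff_imp]
        intro _ ⟨k, _, hk⟩; exact absurd hk (not_le.mpr (hQ k))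
      simp only [hcond]
      rw [← Finset.sum_filter]
      have hset : (Finset.range N).filter (fun n => a ≤ n) = Finset.Ico a N := by
        ext n; simp [Finset.mem_filter, Finset.mem_Ico]; omega
      rw [hset]
      rcases le_or_gt N a with h | h
      · rw [Finset.Ico_eq_empty (by omega)]; simp; linarith
      · rw [aux_tel f a N h.le]
        have := hQ N
        linarith
  · push_neg at hP
    have : ∀ n ∈ Finset.range N,
        (if (∃ k ≤ n, T0 ≤ f k) ∧ ¬∃ k ≤ n, T ≤ f k then f (n + 1) - f n else 0) = 0 := by
      intro n _
      rw [if_neg]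
      rintro ⟨⟨k, _, hk⟩, _⟩; exact absurd hk (not_le.mpr (hP k))
    rw [Finset.sum_congr rfl this]
    simp; linarith

lemma aux_inf_eq (f : ℕ → ℝ) (L : ℝ) (h : ∃ k, L ≤ f k) :
    (⨅ (n : ℕ) (_ : L ≤ f n), (n : ℝ≥0∞)) = (Nat.find h : ℝ≥0∞) := by
  apply le_antisymm
  · exact iInf₂_le (Nat.find h) (Nat.find_spec h)
  · exact le_iInf₂ fun k hk => Nat.cast_le.mpr (Nat.find_min' h hk)

lemma aux_inf_top (f : ℕ → ℝ) (L : ℝ) (h : ¬∃ k, L ≤ f k) :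
    (⨅ (n : ℕ) (_ : L ≤ f n), (n : ℝ≥0∞)) = ⊤ := by
  push_neg at h
  exact le_antisymm le_top
    (le_iInf fun n => le_iInf fun hn => absurd hn (not_le.mpr (h n)))

lemma aux_tsum (f : ℕ → ℝ) (T0 T : ℝ) (hT : T0 ≤ T) (t0 t : ℝ≥0∞)
    (ht0 : t0 = ⨅ (n : ℕ) (_ : T0 ≤ f n), (n : ℝ≥0∞))
    (ht : t = ⨅ (n : ℕ) (_ : T ≤ f n), (n : ℝ≥0∞)) :
    t - t0 = ∑' n : ℕ,
      (if (∃ k ≤ n, T0 ≤ f k) ∧ ¬∃ k ≤ n, T ≤ f k then (1 : ℝ≥0∞) else 0) := by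
  by_cases hP : ∃ k, T0 ≤ f k
  · rw [aux_inf_eq f T0 hP] at ht0
    by_cases hQ : ∃ k, T ≤ f k
    · rw [aux_inf_eq f T hQ] at ht
      set a := Nat.find hP with ha
      set b := Nat.find hQ with hb
      have hab : a ≤ b := Nat.find_min' hP (le_trans hT (Nat.find_spec hQ))
      have hcond : ∀ n, ((∃ k ≤ n, T0 ≤ f k) ∧ ¬∃ k ≤ n, T ≤ f k) ↔ (a ≤ n ∧ n < b) := by
        intro n
        rw [← Nat.find_le_iff hP, ← Nat.find_le_iff hQ, not_le, ← ha, ← hb]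
      have hsum : ∑' n : ℕ,
          (if (∃ k ≤ n, T0 ≤ f k) ∧ ¬∃ k ≤ n, T ≤ f k then (1 : ℝ≥0∞) else 0)
          = ∑ n ∈ Finset.Ico a b, (1 : ℝ≥0∞) := by
        rw [tsum_eq_sum (s := Finset.Ico a b) (fun n hn => by
          rw [if_neg]; rw [hcond n]; simp [Finset.mem_Ico] at hn; omega)]
        apply Finset.sum_congr rfl
        intro n hn
        rw [if_pos]; rw [hcond n]; simpa [Finset.mem_Ico] using hn
      rw [hsum, Finset.sum_const, Nat.card_Ico, ht, ht0, nsmul_eq_mul, mul_one,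
        ← ENNReal.natCast_sub]
    · rw [aux_inf_top f T hQ] at ht
      push_neg at hQ
      have hcond : ∀ n, ((∃ k ≤ n, T0 ≤ f k) ∧ ¬∃ k ≤ n, T ≤ f k) ↔ (Nat.find hP ≤ n) := by
        intro n
        rw [← Nat.find_le_iff hP]
        simp only [and_iff_left_iff_imp]
        intro _ ⟨k, _, hk⟩; exact absurd hk (not_le.mpr (hQ k))
      have hkey : ∀ M : ℕ, (M : ℝ≥0∞) ≤ ∑' n : ℕ,
          (if (∃ k ≤ n, T0 ≤ f k) ∧ ¬∃ k ≤ n, T ≤ f k then (1 : ℝ≥0∞) else 0) := by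
        intro M
        have h1 : ∑ n ∈ Finset.Ico (Nat.find hP) (Nat.find hP + M),
            (if (∃ k ≤ n, T0 ≤ f k) ∧ ¬∃ k ≤ n, T ≤ f k then (1 : ℝ≥0∞) else 0)
            = (M : ℝ≥0∞) := by
          rw [Finset.sum_congr rfl (fun n hn => if_pos (by
            rw [hcond n]; exact (Finset.mem_Ico.mp hn).1))]
          simp [Finset.sum_const, Nat.card_Ico]
        rw [← h1]
        exact ENNReal.sum_le_tsum _
      have htop : ∑' n : ℕ,
          (if (∃ k ≤ n, T0 ≤ f k) ∧ ¬∃ k ≤ n, T ≤ f k then (1 : ℝ≥0∞) else 0) = ⊤ := by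
        by_contra hne
        obtain ⟨M, hM⟩ := ENNReal.exists_nat_gt hne
        exact absurd (hkey M) (not_le.mpr hM)
      rw [htop, ht, ht0, ENNReal.top_sub (ENNReal.natCast_ne_top _)]
  · have hQ : ¬∃ k, T ≤ f k := by
      push_neg at hP ⊢
      intro k; exact lt_of_lt_of_le (hP k) hT
    rw [aux_inf_top f T0 hP] at ht0
    rw [aux_inf_top f T hQ] at ht
    rw [ht, ht0, tsub_self]
    symm
    refine ENNReal.tsum_eq_zero.mpr fun n => if_neg ?_
    push_neg at hP
    rintro ⟨⟨k, _, hk⟩, -⟩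
    exact absurd hk (not_le.mpr (hP k))

/-- bound on the expected time after `τ0` to reach a level `T ≥ T0`,
for a process with drift at least `K1` before `τ0`, drift at least `K2` after `τ0`,
and increments bounded by `K3` (Lemma in the paper). -/
theorem expected_ascent_time_bound {Ω : Type*} {m : MeasurableSpace Ω}
    (μ : Measure Ω) [IsProbabilityMeasure μ]
    (𝓕 : Filtration ℕ m) (ξ : ℕ → Ω → ℝ) (K1 K2 K3 : ℝ)
    (hK1 : 0 < K1) (hK2 : 0 < K2) (hK3 : 0 < K3)
    (hadapted : Adapted 𝓕 ξ) (x0 : ℝ) (hx0 : ξ 0 = fun _ => x0)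
    (hbdd : ∀ n : ℕ, ∀ᵐ ω ∂μ, |ξ (n + 1) ω - ξ n ω| ≤ K3)
    (T0 T : ℝ) (hT : T0 ≤ T)
    (τ0 : Ω → ℝ≥0∞)
    (hτ0 : ∀ ω, τ0 ω = ⨅ (n : ℕ) (_ : T0 ≤ ξ n ω), (n : ℝ≥0∞))
    (hdrift : ∀ n : ℕ, ∀ᵐ ω ∂μ,
      ((n : ℝ≥0∞) < τ0 ω → ξ n ω + K1 ≤ (μ[ξ (n + 1) | 𝓕 n]) ω) ∧
      (τ0 ω ≤ (n : ℝ≥0∞) → ξ n ω + K2 ≤ (μ[ξ (n + 1) | 𝓕 n]) ω))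
    (τ : Ω → ℝ≥0∞)
    (hτ : ∀ ω, τ ω = ⨅ (n : ℕ) (_ : T ≤ ξ n ω), (n : ℝ≥0∞)) :
    ∫⁻ ω, (τ ω - τ0 ω) ∂μ ≤ ENNReal.ofReal ((|T0 - T| + 3 * K3) / K2) := by
  classical
  have hx00 : ∀ ω, ξ 0 ω = x0 := fun ω => congrFun hx0 ω
  by_cases hx : T ≤ x0
  · -- trivial case: τ = τ0 = 0
    have h0 : ∀ ω, τ ω - τ0 ω = 0 := by
      intro ω
      have hτz : τ ω = 0 := by
        refine le_antisymm ?_ zero_le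
        rw [hτ ω]
        exact le_trans (iInf₂_le 0 (by rw [hx00 ω]; exact hx)) (by simp)
      have hτ0z : τ0 ω = 0 := by
        refine le_antisymm ?_ zero_le
        rw [hτ0 ω]
        exact le_trans (iInf₂_le 0 (by rw [hx00 ω]; exact hT.trans hx)) (by simp)
      rw [hτz, hτ0z]; simp
    calc ∫⁻ ω, (τ ω - τ0 ω) ∂μ = ∫⁻ _, 0 ∂μ := lintegral_congr h0
    _ = 0 := lintegral_zero
    _ ≤ _ := zero_le
  · push_neg at hx
    set A : ℕ → Set Ω :=
      fun n => {ω | (∃ k ≤ n, T0 ≤ ξ k ω) ∧ ¬∃ k ≤ n, T ≤ ξ k ω} with hA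
    have hSmeas : ∀ (L : ℝ) (n : ℕ), MeasurableSet[𝓕 n] {ω | ∃ k ≤ n, L ≤ ξ k ω} := by
      intro L n
      have hrw : {ω | ∃ k ≤ n, L ≤ ξ k ω}
          = ⋃ k ∈ Finset.range (n + 1), {ω | L ≤ ξ k ω} := by
        ext ω; simp [Nat.lt_succ_iff]
      rw [hrw]
      refine MeasurableSet.biUnion (Finset.range (n + 1)).countable_toSet fun k hk => ?_
      have hk' : k ≤ n := Nat.lt_succ_iff.mp (Finset.mem_range.mp (Finset.mem_coe.mp hk))
      exact measurableSet_le measurable_const ((hadapted k).mono (𝓕.mono hk') le_rfl)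
    have hAmeasF : ∀ n, MeasurableSet[𝓕 n] (A n) :=
      fun n => (hSmeas T0 n).diff (hSmeas T n)
    have hAmeas : ∀ n, MeasurableSet (A n) := fun n => 𝓕.le n _ (hAmeasF n)
    have hbddall : ∀ᵐ ω ∂μ, ∀ n, |ξ (n + 1) ω - ξ n ω| ≤ K3 := ae_all_iff.mpr hbdd
    have habs : ∀ᵐ ω ∂μ, ∀ n : ℕ, |ξ n ω| ≤ |x0| + n * K3 := by
      filter_upwards [hbddall] with ω hω
      intro n
      induction n with
      | zero => simp [hx00 ω]
      | succ n ih =>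
        have h1 : |ξ (n + 1) ω| ≤ |ξ n ω| + |ξ (n + 1) ω - ξ n ω| := by
          have := abs_add_le (ξ n ω) (ξ (n + 1) ω - ξ n ω)
          simpa using this
        have h2 := hω n
        push_cast
        linarith
    have hint : ∀ n, Integrable (ξ n) μ := by
      intro n
      refine Integrable.mono' (integrable_const (|x0| + n * K3))
        (((hadapted n).mono (𝓕.le n) le_rfl).aestronglyMeasurable) ?_
      filter_upwards [habs] with ω hω
      simpa using hω n
    have hstep : ∀ n, K2 * (μ (A n)).toReal ≤ ∫ ω in A n, (ξ (n + 1) ω - ξ n ω) ∂μ := by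
      intro n
      have h1 : ∫ ω in A n, ξ (n + 1) ω ∂μ = ∫ ω in A n, (μ[ξ (n + 1)|𝓕 n]) ω ∂μ :=
        (setIntegral_condExp (𝓕.le n) (hint (n + 1)) (hAmeasF n)).symm
      have h2 : ∫ ω in A n, (ξ n ω + K2) ∂μ ≤ ∫ ω in A n, (μ[ξ (n + 1)|𝓕 n]) ω ∂μ := by
        refine setIntegral_mono_ae_restrict
          ((hint n).add (integrable_const K2)).integrableOn
          integrable_condExp.integrableOn ?_
        rw [Filter.EventuallyLE, ae_restrict_iff' (hAmeas n)]
        filter_upwards [hdrift n] with ω hω hmem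
        refine hω.2 ?_
        obtain ⟨k, hk, hk'⟩ := hmem.1
        rw [hτ0 ω]
        exact le_trans (iInf₂_le k hk') (Nat.cast_le.mpr hk)
      have h3 : ∫ ω in A n, (ξ n ω + K2) ∂μ
          = ∫ ω in A n, ξ n ω ∂μ + K2 * (μ (A n)).toReal := by
        rw [integral_add (hint n).integrableOn (integrable_const K2).integrableOn,
          setIntegral_const]
        ring_nf
        simp [smul_eq_mul, mul_comm, Measure.real]
      have h4 : ∫ ω in A n, (ξ (n + 1) ω - ξ n ω) ∂μ
          = ∫ ω in A n, ξ (n + 1) ω ∂μ - ∫ ω in A n, ξ n ω ∂μ :=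
        integral_sub (hint (n + 1)).integrableOn (hint n).integrableOn
      rw [h4]
      rw [h3] at h2
      linarith [h1 ▸ h2]
    have hpartial : ∀ N : ℕ,
        ∑ n ∈ Finset.range N, (μ (A n)).toReal ≤ (T - T0 + K3) / K2 := by
      intro N
      have hs : K2 * ∑ n ∈ Finset.range N, (μ (A n)).toReal ≤ T - T0 + K3 := by
        calc K2 * ∑ n ∈ Finset.range N, (μ (A n)).toReal
            = ∑ n ∈ Finset.range N, K2 * (μ (A n)).toReal := Finset.mul_sum _ _ _
          _ ≤ ∑ n ∈ Finset.range N, ∫ ω in A n, (ξ (n + 1) ω - ξ n ω) ∂μ :=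
              Finset.sum_le_sum fun n _ => hstep n
          _ = ∫ ω, ∑ n ∈ Finset.range N,
                (A n).indicator (fun ω => ξ (n + 1) ω - ξ n ω) ω ∂μ := by
              rw [integral_finset_sum (Finset.range N)
                (f := fun n ω => (A n).indicator (fun ω => ξ (n + 1) ω - ξ n ω) ω)
                (fun n _ => ((hint (n + 1)).sub (hint n)).indicator (hAmeas n))]
              exact Finset.sum_congr rfl fun n _ => (integral_indicator (hAmeas n)).symm
          _ ≤ ∫ _, (T - T0 + K3) ∂μ := by
              refine integral_mono_ae
                (integrable_finset_sum _
                  (fun n _ => ((hint (n + 1)).sub (hint n)).indicator (hAmeas n)))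
                (integrable_const _) ?_
              filter_upwards [hbddall] with ω hω
              have hkey := aux_sum (fun n => ξ n ω) T0 T K3 hT hK3
                (by simp only [hx00 ω]; exact hx) (fun n => hω n) N
              simpa [Set.indicator_apply, hA, Set.mem_setOf_eq] using hkey
          _ = T - T0 + K3 := by simp
      rw [le_div_iff₀ hK2]
      linarith
    have htsum : ∑' n, μ (A n) ≤ ENNReal.ofReal ((T - T0 + K3) / K2) := by
      rw [ENNReal.tsum_eq_iSup_sum]
      refine iSup_le fun s => ?_
      obtain ⟨N, hN⟩ := s.exists_nat_subset_range
      calc ∑ n ∈ s, μ (A n) ≤ ∑ n ∈ Finset.range N, μ (A n) :=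
            Finset.sum_le_sum_of_subset hN
        _ = ENNReal.ofReal (∑ n ∈ Finset.range N, (μ (A n)).toReal) := by
            rw [ENNReal.ofReal_sum_of_nonneg (fun n _ => ENNReal.toReal_nonneg)]
            exact Finset.sum_congr rfl fun n _ =>
              (ENNReal.ofReal_toReal (measure_ne_top μ _)).symm
        _ ≤ _ := ENNReal.ofReal_le_ofReal (hpartial N)
    have hlin : ∫⁻ ω, (τ ω - τ0 ω) ∂μ = ∑' n, μ (A n) := by
      have hpt : ∀ ω, τ ω - τ0 ω
          = ∑' n, (A n).indicator (fun _ => (1 : ℝ≥0∞)) ω := by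
        intro ω
        rw [aux_tsum (fun n => ξ n ω) T0 T hT (τ0 ω) (τ ω) (hτ0 ω) (hτ ω)]
        exact tsum_congr fun n => by
          simp [Set.indicator_apply, hA, Set.mem_setOf_eq]
      calc ∫⁻ ω, (τ ω - τ0 ω) ∂μ
          = ∫⁻ ω, ∑' n, (A n).indicator (fun _ => (1 : ℝ≥0∞)) ω ∂μ :=
            lintegral_congr hpt
        _ = ∑' n, ∫⁻ ω, (A n).indicator (fun _ => (1 : ℝ≥0∞)) ω ∂μ :=
            lintegral_tsum fun n => (measurable_const.indicator (hAmeas n)).aemeasurable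
        _ = ∑' n, μ (A n) := tsum_congr fun n => lintegral_indicator_one (hAmeas n)
    rw [hlin]
    refine le_trans htsum (ENNReal.ofReal_le_ofReal ?_)
    have habsT : |T0 - T| = T - T0 := by
      rw [abs_sub_comm, abs_of_nonneg (by linarith)]
    rw [habsT]
    gcongr
    linarith
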